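/- Let 0 < a < 1/2, f(u) = u(1-u)(u-a), c = √2(a - 1/2), and ξ = (1, 0, -a√2, √2) ∈ ℝ⁴. Let J be the matrix with rows (0,0,1,0),(0,0,0,-1),(-1,0,0,0),(0,1,0,0), and let A be the matrix with rows (0,0,1,0),(0,0,0,0),(-f'(a+1/2),1,-c,0),(-1,γ,0,-c). Then ⟨ξ, J A ξ⟩ = -f'(a + 1/2) + c·a√2 - 2a² = a² - 1/4 < 0. -/

import Mathlib

open Real Matrix

/-- The crossing form at the conjugate point on the fast front is negative:
`⟨ξ, JAξ⟩ = -f'(a + 1/2) + c a√2 - 2a² = a² - 1/4 < 0`. -/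
theorem stmt_13 (a γ : ℝ) (ha : 0 < a) (ha' : a < 1/2)
    (f : ℝ → ℝ) (hf : ∀ x, f x = x * (1 - x) * (x - a))
    (c : ℝ) (hc : c = Real.sqrt 2 * (a - 1/2))
    (ξ : Fin 4 → ℝ) (hξ : ξ = ![1, 0, -a * Real.sqrt 2, Real.sqrt 2])
    (J : Matrix (Fin 4) (Fin 4) ℝ)
    (hJ : J = !![0,0,1,0; 0,0,0,-1; -1,0,0,0; 0,1,0,0])
    (A : Matrix (Fin 4) (Fin 4) ℝ)
    (hA : A = !![0,0,1,0; 0,0,0,0;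
      -(deriv f (a + 1/2)), 1, -c, 0; -1, γ, 0, -c]) :
    ξ ⬝ᵥ (J *ᵥ (A *ᵥ ξ)) = -(deriv f (a + 1/2)) + c * (a * Real.sqrt 2) - 2 * a^2 ∧
    ξ ⬝ᵥ (J *ᵥ (A *ᵥ ξ)) = a^2 - 1/4 ∧
    ξ ⬝ᵥ (J *ᵥ (A *ᵥ ξ)) < 0 := by
  have hfe : f = fun x => x * (1 - x) * (x - a) := funext hf
  have hd : deriv f (a + 1/2) = -a^2 - a + 1/4 := by
    have h : HasDerivAt f (-a^2 - a + 1/4) (a + 1/2) := by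
      rw [hfe]
      have h1 := ((hasDerivAt_id (a + 1/2)).mul
        ((hasDerivAt_const (a + 1/2) (1:ℝ)).sub (hasDerivAt_id (a + 1/2)))).mul
        ((hasDerivAt_id (a + 1/2)).sub (hasDerivAt_const (a + 1/2) a))
      refine h1.congr_deriv ?_
      simp only [id, Pi.mul_apply, Pi.sub_apply]
      ring
    exact h.deriv
  have hs : Real.sqrt 2 * Real.sqrt 2 = 2 := Real.mul_self_sqrt (by norm_num)
  subst hξ hJ hA hc
  have key : (![(1:ℝ), 0, -a * Real.sqrt 2, Real.sqrt 2] ⬝ᵥ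
      (!![0,0,1,0; 0,0,0,-1; -1,0,0,0; 0,1,0,0] *ᵥ
        (!![0,0,1,0; 0,0,0,0;
          -(deriv f (a + 1/2)), 1, -(Real.sqrt 2 * (a - 1/2)), 0;
          -1, γ, 0, -(Real.sqrt 2 * (a - 1/2))] *ᵥ
          ![1, 0, -a * Real.sqrt 2, Real.sqrt 2]))) = a^2 - 1/4 := by
    simp [Matrix.mulVec, dotProduct, Fin.sum_univ_succ, hd]
    nlinarith [hs]
  refine ⟨?_, key, ?_⟩
  · rw [key, hd]; nlinarith [hs]
  · rw [key]; nlinarith
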